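/- Assume (φ1)–(φ3) and (V1)–(V5), and let q be the unique heteroclinic solution of problem (P). Then: (i) −α < q(s) < 0 < q(t) < α for all s < 0 < t; (ii) q'(t) > 0 for every t ∈ ℝ, so q is strictly increasing on ℝ; and (iii) q' is non-increasing on [0,∞), so q is concave on [0,∞). -/

import Mathlib

open Real Filter Set MeasureTheory Topology

set_option linter.unusedSectionVars false
set_option maxHeartbeats 1000000

noncomputable def Phi (φ : ℝ → ℝ) (t : ℝ) : ℝ := ∫ s in (0:ℝ)..|t|, s * φ s

def IsClassicalSolution (φ V q : ℝ → ℝ) : Prop :=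
  Differentiable ℝ q ∧
  ∀ t : ℝ, HasDerivAt
    (fun s => if deriv q s = 0 then 0 else φ |deriv q s| * deriv q s)
    (deriv V (q t)) t

def IsHeteroclinic (φ V : ℝ → ℝ) (α : ℝ) (q : ℝ → ℝ) : Prop :=
  IsClassicalSolution φ V q ∧ Differentiable ℝ (deriv q) ∧ Continuous (deriv q) ∧
  q 0 = 0 ∧ Tendsto q atTop (nhds α) ∧ Tendsto q atBot (nhds (-α))

noncomputable def gg (φ : ℝ → ℝ) (s : ℝ) : ℝ := if s = 0 then 0 else φ |s| * s

noncomputable def DD (φ : ℝ → ℝ) (s : ℝ) : ℝ := s * gg φ s - Phi φ s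

section AuxPhi

variable {φ : ℝ → ℝ} {l c₁ c₂ δ₀ r : ℝ}
variable (hφC1 : ContDiffOn ℝ 1 φ (Set.Ioi 0))
variable (hφpos : ∀ t > 0, 0 < φ t)
variable (hφ1 : ∀ t > 0, 0 < deriv (fun s => φ s * s) t)
variable (hφ2l : ∀ t > 0, l - 1 ≤ deriv (fun s => φ s * s) t / φ t)
variable (hl : 1 < l)
variable (hc₁ : 0 < c₁) (hc₂ : 0 < c₂) (hδ₀ : 0 < δ₀) (hr : 1 < r)
variable (h3 : ∀ t : ℝ, 0 < t → t ≤ δ₀ → c₁ * t ^ (r - 1) ≤ φ t * t ∧ φ t * t ≤ c₂ * t ^ (r - 1))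

lemma gg_zero : gg φ 0 = 0 := by simp [gg]

lemma gg_of_pos {s : ℝ} (hs : 0 < s) : gg φ s = φ s * s := by
  simp [gg, hs.ne', abs_of_pos hs]

lemma gg_of_nonneg {s : ℝ} (hs : 0 ≤ s) : gg φ s = φ s * s := by
  rcases eq_or_lt_of_le hs with h|h
  · simp [gg, ← h]
  · exact gg_of_pos h

lemma gg_neg (s : ℝ) : gg φ (-s) = - gg φ s := by
  rcases eq_or_ne s 0 with rfl|h
  · simp [gg]
  · simp only [gg, if_neg (neg_ne_zero.mpr h), if_neg h, abs_neg]
    ring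

lemma Phi_abs (s : ℝ) : Phi φ |s| = Phi φ s := by simp [Phi, abs_abs]

lemma Phi_neg (s : ℝ) : Phi φ (-s) = Phi φ s := by simp [Phi, abs_neg]

lemma DD_neg (s : ℝ) : DD φ (-s) = DD φ s := by
  simp [DD, gg_neg, Phi_neg]

lemma DD_abs (s : ℝ) : DD φ |s| = DD φ s := by
  rcases abs_choice s with h|h
  · rw [h]
  · rw [h, DD_neg]

include hφpos hr h3 in
lemma gg_abs_le {s : ℝ} (hs : |s| ≤ δ₀) : |gg φ s| ≤ c₂ * |s| ^ (r - 1) := by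
  rcases eq_or_ne s 0 with rfl|h
  · simp [gg, Real.zero_rpow (by linarith : r - 1 ≠ 0)]
  · have habs : 0 < |s| := abs_pos.mpr h
    have : |gg φ s| = φ |s| * |s| := by
      rw [gg]; rw [if_neg h, abs_mul]
      rw [abs_of_pos (hφpos _ habs)]
    rw [this]
    exact (h3 _ habs hs).2

include hφC1 hφpos hδ₀ hr h3 in
lemma hcont : ContinuousOn (fun s : ℝ => s * φ s) (Ici 0) := by
  intro x hx
  rcases eq_or_lt_of_le (mem_Ici.mp hx : (0:ℝ) ≤ x) with h|h
  · subst h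
    have hev : ∀ᶠ s in 𝓝[Ici 0] (0:ℝ), s ∈ Icc (0:ℝ) δ₀ := by
      have h1 : ∀ᶠ s in 𝓝[Ici 0] (0:ℝ), s ∈ Ici (0:ℝ) := self_mem_nhdsWithin
      have h2 : ∀ᶠ s in 𝓝[Ici 0] (0:ℝ), s < δ₀ :=
        eventually_nhdsWithin_of_eventually_nhds (tendsto_id.eventually_lt_const hδ₀)
      filter_upwards [h1, h2] with s hs hs' using ⟨hs, le_of_lt hs'⟩
    have key : Tendsto (fun s => s * φ s) (𝓝[Ici 0] 0) (𝓝 0) := by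
      apply squeeze_zero' (g := fun s => c₂ * s ^ (r - 1))
      · filter_upwards [hev] with s hs
        rcases eq_or_lt_of_le hs.1 with h|h
        · simp [← h]
        · exact le_of_lt (mul_pos h (hφpos s h))
      · filter_upwards [hev] with s hs
        rcases eq_or_lt_of_le hs.1 with h|h
        · simp [← h, Real.zero_rpow (by linarith : r - 1 ≠ 0)]
        · rw [mul_comm]; exact (h3 s h hs.2).2
      · have hca : ContinuousAt (fun s : ℝ => c₂ * s ^ (r - 1)) 0 :=
          (continuousAt_const.mul (Real.continuousAt_rpow_const 0 (r-1) (Or.inr (by linarith))))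
        have h0 : c₂ * (0:ℝ) ^ (r - 1) = 0 := by
          rw [Real.zero_rpow (by linarith : r - 1 ≠ 0), mul_zero]
        exact (h0 ▸ hca.tendsto).mono_left nhdsWithin_le_nhds
    unfold ContinuousWithinAt
    simpa using key
  · exact ((continuousAt_id.mul
      ((hφC1.continuousOn.continuousAt (Ioi_mem_nhds h)))).continuousWithinAt)

include hφC1 hφpos hδ₀ hr h3 in
lemma intInt {a b : ℝ} (ha : 0 ≤ a) (hb : 0 ≤ b) :
    IntervalIntegrable (fun s => s * φ s) volume a b :=
  ((hcont hφC1 hφpos hδ₀ hr h3).mono (fun x hx => by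
    rcases le_total a b with h|h <;>
      simp only [uIcc_of_le, uIcc_of_ge, h] at hx <;>
      [exact le_trans ha hx.1; exact le_trans hb hx.1])).intervalIntegrable

include hφpos in
lemma Phi_nonneg (s : ℝ) : 0 ≤ Phi φ s := by
  rw [Phi]
  apply intervalIntegral.integral_nonneg (abs_nonneg s)
  intro u hu
  rcases eq_or_lt_of_le hu.1 with h|h
  · simp [← h]
  · exact le_of_lt (mul_pos h (hφpos u h))

lemma Phi_zero : Phi φ 0 = 0 := by simp [Phi]

include hφC1 hφpos hδ₀ hr h3 hc₂ in
lemma Phi_le {u : ℝ} (h0 : 0 ≤ u) (h1 : u ≤ δ₀) : Phi φ u ≤ c₂ * u ^ r / r := by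
  have habs : |u| = u := abs_of_nonneg h0
  have hint : ∫ s in (0:ℝ)..u, c₂ * s ^ (r-1) = c₂ * u ^ r / r := by
    rw [intervalIntegral.integral_const_mul, integral_rpow (Or.inl (by linarith)),
      Real.zero_rpow (by intro h; linarith : r - 1 + 1 ≠ 0)]
    rw [show r - 1 + 1 = r by ring]
    ring
  rw [Phi, habs, ← hint]
  apply intervalIntegral.integral_mono_on h0 (intInt hφC1 hφpos hδ₀ hr h3 le_rfl h0)
    ((continuous_const.mul (Real.continuous_rpow_const (by linarith))).intervalIntegrable _ _)
  · intro x hx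
    rcases eq_or_lt_of_le hx.1 with h|h
    · simp [← h, Real.zero_rpow (by intro hh; linarith : r - 1 ≠ 0)]
    · rw [mul_comm]; exact (h3 x h (le_trans hx.2 h1)).2

include hφC1 hφpos hδ₀ hr h3 hc₁ in
lemma le_Phi {u : ℝ} (h0 : 0 ≤ u) (h1 : u ≤ δ₀) : c₁ * u ^ r / r ≤ Phi φ u := by
  have habs : |u| = u := abs_of_nonneg h0
  have hint : ∫ s in (0:ℝ)..u, c₁ * s ^ (r-1) = c₁ * u ^ r / r := by
    rw [intervalIntegral.integral_const_mul, integral_rpow (Or.inl (by linarith)),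
      Real.zero_rpow (by intro h; linarith : r - 1 + 1 ≠ 0)]
    rw [show r - 1 + 1 = r by ring]
    ring
  rw [Phi, habs, ← hint]
  apply intervalIntegral.integral_mono_on h0
    ((continuous_const.mul (Real.continuous_rpow_const (by linarith))).intervalIntegrable _ _)
    (intInt hφC1 hφpos hδ₀ hr h3 le_rfl h0)
  · intro x hx
    rcases eq_or_lt_of_le hx.1 with h|h
    · simp [← h, Real.zero_rpow (by intro hh; linarith : r - 1 ≠ 0)]
    · rw [mul_comm (x)]; exact (h3 x h (le_trans hx.2 h1)).1

include hφC1 hφpos hδ₀ hr h3 in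
lemma hasDerivAt_H {b : ℝ} (hb : 0 < b) :
    HasDerivAt (fun t => ∫ s in (0:ℝ)..t, s * φ s) (b * φ b) b := by
  apply intervalIntegral.integral_hasDerivAt_right
    (intInt hφC1 hφpos hδ₀ hr h3 le_rfl (le_of_lt hb))
  · exact ⟨Ioi 0, Ioi_mem_nhds hb,
      (((hcont hφC1 hφpos hδ₀ hr h3).mono
        (fun x hx => le_of_lt hx)).aestronglyMeasurable measurableSet_Ioi)⟩
  · exact (continuousAt_id.mul (hφC1.continuousOn.continuousAt (Ioi_mem_nhds hb)))

include hφC1 hφpos hc₂ hδ₀ hr h3 in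
lemma hasDerivAt_Phi (s : ℝ) : HasDerivAt (Phi φ) (gg φ s) s := by
  rcases lt_trichotomy s 0 with h|h|h
  · have hH : HasDerivAt (fun t => (fun t => ∫ s in (0:ℝ)..t, s * φ s) (-t)) (s * φ (-s)) s := by
      have h1 : HasDerivAt (fun t => ∫ s in (0:ℝ)..t, s * φ s) ((-s) * φ (-s)) (-s) :=
        hasDerivAt_H hφC1 hφpos hδ₀ hr h3 (by linarith)
      have h2 := h1.comp s (hasDerivAt_neg s)
      refine h2.congr_deriv ?_
      ring
    have hev : (fun t => (fun t => ∫ s in (0:ℝ)..t, s * φ s) (-t)) =ᶠ[𝓝 s] Phi φ := by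
      filter_upwards [Iio_mem_nhds h] with t ht
      simp only [Phi, abs_of_neg (mem_Iio.mp ht)]
    have h3' := hH.congr_of_eventuallyEq hev.symm
    refine h3'.congr_deriv ?_
    rw [gg, if_neg (ne_of_lt h), abs_of_neg h]
    ring
  · subst h
    rw [hasDerivAt_iff_tendsto_slope, (by simp [gg] : gg φ 0 = 0)]
    apply squeeze_zero_norm' (a := fun t => (c₂ / r) * |t| ^ (r-1))
    · have hev : ∀ᶠ t in 𝓝[≠] (0:ℝ), |t| < δ₀ := by
        apply eventually_nhdsWithin_of_eventually_nhds
        have hca : ContinuousAt (fun t : ℝ => |t|) 0 := continuous_abs.continuousAt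
        exact hca.eventually_lt_const (by simpa using hδ₀)
      filter_upwards [hev, self_mem_nhdsWithin] with t ht ht0
      have ht0' : t ≠ 0 := ht0
      have habs : 0 < |t| := abs_pos.mpr ht0'
      have hs : slope (Phi φ) 0 t = Phi φ t / t := by
        simp [slope_def_field, Phi_zero]
      rw [hs, Real.norm_eq_abs, abs_div]
      have h1 : |Phi φ t| = Phi φ |t| := by
        rw [abs_of_nonneg (Phi_nonneg hφpos t)]; simp [Phi, abs_abs]
      rw [h1]
      have h2 : Phi φ |t| ≤ c₂ * |t| ^ r / r :=
        Phi_le hφC1 hφpos hc₂ hδ₀ hr h3 (abs_nonneg t) (le_of_lt ht)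
      rw [div_le_iff₀ habs]
      calc Phi φ |t| ≤ c₂ * |t| ^ r / r := h2
        _ = (c₂ / r) * (|t| ^ (r-1) * |t|) := by
            rw [← Real.rpow_add_one (ne_of_gt habs)]
            rw [show r - 1 + 1 = r by ring]; ring
        _ = c₂ / r * |t| ^ (r - 1) * |t| := by ring
    · have hca : ContinuousAt (fun t : ℝ => (c₂ / r) * |t| ^ (r-1)) 0 := by
        apply continuousAt_const.mul
        have hc : ContinuousAt (fun x : ℝ => x ^ (r-1)) |((0:ℝ))| := by
          simp only [abs_zero]
          exact Real.continuousAt_rpow_const 0 (r-1) (Or.inr (by linarith))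
        exact hc.comp continuous_abs.continuousAt
      have h0 : (c₂ / r) * |(0:ℝ)| ^ (r-1) = 0 := by
        simp [Real.zero_rpow (by intro hh; linarith : r - 1 ≠ 0)]
      exact (h0 ▸ hca.tendsto).mono_left nhdsWithin_le_nhds
  · have hH : HasDerivAt (fun t => ∫ s in (0:ℝ)..t, s * φ s) (s * φ s) s :=
      hasDerivAt_H hφC1 hφpos hδ₀ hr h3 h
    have hev : (fun t => ∫ s in (0:ℝ)..t, s * φ s) =ᶠ[𝓝 s] Phi φ := by
      filter_upwards [Ioi_mem_nhds h] with t ht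
      simp only [Phi, abs_of_pos (mem_Ioi.mp ht)]
    have h3' := hH.congr_of_eventuallyEq hev.symm
    refine h3'.congr_deriv ?_
    rw [gg_of_pos h]
    ring

include hφC1 hφpos hδ₀ hr h3 in
lemma hcont' : ContinuousOn (fun s : ℝ => φ s * s) (Ici 0) := by
  have h : (fun s : ℝ => φ s * s) = fun s => s * φ s := funext fun s => mul_comm _ _
  rw [h]; exact hcont hφC1 hφpos hδ₀ hr h3

include hφC1 hφpos hφ1 hδ₀ hr h3 in
lemma gg_smo : StrictMonoOn (gg φ) (Ici 0) := by
  have smo : StrictMonoOn (fun s : ℝ => φ s * s) (Ici 0) := by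
    apply strictMonoOn_of_deriv_pos (convex_Ici 0) (hcont' hφC1 hφpos hδ₀ hr h3)
    intro x hx
    rw [interior_Ici] at hx
    exact hφ1 x hx
  intro a ha b hb hab
  rw [gg_of_nonneg ha, gg_of_nonneg hb]
  exact smo ha hb hab

lemma gg_eq' {x : ℝ} (hx : 0 ≤ x) : x * φ x = gg φ x := by
  rw [gg_of_nonneg hx]; ring

include hφC1 hφpos hφ1 hδ₀ hr h3 in
lemma DD_pos {s : ℝ} (hs : 0 < s) : 0 < DD φ s := by
  have gsmo := gg_smo hφC1 hφpos hφ1 hδ₀ hr h3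
  have gmono := gsmo.monotoneOn
  have h2 : (0:ℝ) ≤ s/2 := by linarith
  have hs2 : s/2 ∈ Ici (0:ℝ) := h2
  have hsI : s ∈ Ici (0:ℝ) := le_of_lt hs
  have hlt : gg φ (s/2) < gg φ s := gsmo hs2 hsI (by linarith)
  have key : Phi φ s < s * gg φ s := by
    have hsp : Phi φ s = (∫ u in (0:ℝ)..(s/2), u * φ u) + ∫ u in (s/2)..s, u * φ u := by
      rw [Phi, abs_of_pos hs]
      rw [intervalIntegral.integral_add_adjacent_intervals
        (intInt hφC1 hφpos hδ₀ hr h3 le_rfl h2) (intInt hφC1 hφpos hδ₀ hr h3 h2 hsI)]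
    have hb1 : (∫ u in (0:ℝ)..(s/2), u * φ u) ≤ (s/2) * gg φ (s/2) := by
      have hmono := intervalIntegral.integral_mono_on h2 (intInt hφC1 hφpos hδ₀ hr h3 le_rfl h2)
        (intervalIntegrable_const (c := gg φ (s/2))) (fun x hx => by
          rw [gg_eq' hx.1]
          exact gmono (hx.1 : x ∈ Ici 0) hs2 hx.2)
      simpa using hmono
    have hb2 : (∫ u in (s/2)..s, u * φ u) ≤ (s/2) * gg φ s := by
      have hmono := intervalIntegral.integral_mono_on (by linarith : s/2 ≤ s)
        (intInt hφC1 hφpos hδ₀ hr h3 h2 hsI)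
        (intervalIntegrable_const (c := gg φ s)) (fun x hx => by
          rw [gg_eq' (le_trans h2 hx.1)]
          exact gmono (le_trans h2 hx.1 : x ∈ Ici 0) hsI hx.2)
      have heq : s - s/2 = s/2 := by ring
      simpa [heq] using hmono
    have hsum : Phi φ s ≤ (s/2) * gg φ (s/2) + (s/2) * gg φ s := by
      rw [hsp]; exact add_le_add hb1 hb2
    nlinarith
  simp only [DD]; linarith

lemma DD_zero : DD φ 0 = 0 := by simp [DD, Phi_zero]

include hφC1 hφpos hφ1 hδ₀ hr h3 in
lemma DD_pos' {s : ℝ} (hs : s ≠ 0) : 0 < DD φ s := by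
  rcases lt_or_gt_of_ne hs with h|h
  · rw [← DD_neg]; exact DD_pos hφC1 hφpos hφ1 hδ₀ hr h3 (by linarith)
  · exact DD_pos hφC1 hφpos hφ1 hδ₀ hr h3 h

include hφC1 hφpos hc₂ hδ₀ hr h3 in
lemma Phi_cont : Continuous (Phi φ) := by
  apply continuous_iff_continuousAt.mpr
  exact fun x => (hasDerivAt_Phi hφC1 hφpos hc₂ hδ₀ hr h3 x).continuousAt

include hφC1 hφpos hφ1 hφ2l hl hc₂ hδ₀ hr h3 in
lemma DD_ge_aux : ∀ s : ℝ, 0 ≤ s → (l - 1) * Phi φ s ≤ DD φ s := by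
  have hmono : MonotoneOn (fun t => t * gg φ t - l * Phi φ t) (Ici 0) := by
    apply monotoneOn_of_deriv_nonneg (convex_Ici 0)
    · apply ContinuousOn.sub
      · apply ContinuousOn.congr (continuousOn_id.mul (hcont hφC1 hφpos hδ₀ hr h3))
        intro x hx
        simp only [id_eq, Pi.mul_apply]
        rw [← gg_eq' hx]
      · exact ((Phi_cont hφC1 hφpos hc₂ hδ₀ hr h3).continuousOn).const_smul l
    · intro x hx
      rw [interior_Ici] at hx
      have hφd : DifferentiableAt ℝ φ x :=
        (hφC1.contDiffAt (Ioi_mem_nhds hx)).differentiableAt one_ne_zero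
      have hp : DifferentiableAt ℝ (fun t => t * (φ t * t)) x :=
        differentiableAt_fun_id.mul (hφd.mul differentiableAt_fun_id)
      have hev : (fun t : ℝ => t * (φ t * t)) =ᶠ[𝓝 x] fun t => t * gg φ t := by
        filter_upwards [Ioi_mem_nhds hx] with t ht
        rw [gg_of_pos ht]
      have hgd : DifferentiableAt ℝ (fun t => t * gg φ t) x :=
        (Filter.EventuallyEq.differentiableAt_iff hev).mp hp
      exact (hgd.sub
        (((hasDerivAt_Phi hφC1 hφpos hc₂ hδ₀ hr h3 x).differentiableAt).const_mul l)).differentiableWithinAt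
    · intro x hx
      rw [interior_Ici] at hx
      set d := deriv (fun s => φ s * s) x with hd
      have hφd : DifferentiableAt ℝ φ x :=
        (hφC1.contDiffAt (Ioi_mem_nhds hx)).differentiableAt one_ne_zero
      have hp : HasDerivAt (fun s => φ s * s) d x := (hφd.mul differentiableAt_fun_id).hasDerivAt
      have h1 : HasDerivAt (fun t : ℝ => t * (φ t * t)) (1 * (φ x * x) + x * d) x :=
        (hasDerivAt_id x).mul hp
      have hev : (fun t : ℝ => t * (φ t * t)) =ᶠ[𝓝 x] fun t => t * gg φ t := by
        filter_upwards [Ioi_mem_nhds hx] with t ht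
        rw [gg_of_pos ht]
      have h2 : HasDerivAt (fun t => t * gg φ t) (1 * (φ x * x) + x * d) x :=
        h1.congr_of_eventuallyEq hev.symm
      have h3' : HasDerivAt (fun t => t * gg φ t - l * Phi φ t)
          (1 * (φ x * x) + x * d - l * gg φ x) x :=
        h2.sub ((hasDerivAt_Phi hφC1 hφpos hc₂ hδ₀ hr h3 x).const_mul l)
      rw [h3'.deriv]
      have hgg : gg φ x = φ x * x := gg_of_pos hx
      have hphi : 0 < φ x := hφpos x hx
      have h5 : (l - 1) * φ x ≤ d := (le_div_iff₀ hphi).mp (hφ2l x hx)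
      rw [hgg]
      nlinarith [mul_le_mul_of_nonneg_left h5 (le_of_lt hx)]
  intro s hs
  have h0 : (fun t => t * gg φ t - l * Phi φ t) 0 = 0 := by simp [gg, Phi_zero]
  have hm := hmono (self_mem_Ici) (hs : s ∈ Ici 0) hs
  rw [h0] at hm
  simp only at hm
  simp only [DD]
  linarith

end AuxPhi

lemma qprime_bound {φ : ℝ → ℝ} {l c₁ c₂ δ₀ r : ℝ}
    (hφC1 : ContDiffOn ℝ 1 φ (Set.Ioi 0))
    (hφpos : ∀ t > 0, 0 < φ t)
    (hφ1 : ∀ t > 0, 0 < deriv (fun s => φ s * s) t)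
    (hφ2l : ∀ t > 0, l - 1 ≤ deriv (fun s => φ s * s) t / φ t)
    (hl : 1 < l) (hc₁ : 0 < c₁) (hc₂ : 0 < c₂) (hδ₀ : 0 < δ₀) (hr : 1 < r)
    (h3 : ∀ t : ℝ, 0 < t → t ≤ δ₀ → c₁ * t ^ (r - 1) ≤ φ t * t ∧ φ t * t ≤ c₂ * t ^ (r - 1))
    {s w Vval a : ℝ} (ha : 0 < a) (hw0 : 0 ≤ w) (hwδ : w ≤ δ₀) (hs : |s| ≤ δ₀)
    (hVle : Vval ≤ a * Phi φ w) (hDD : DD φ s = Vval) :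
    |s| ≤ ((a * c₂) / ((l - 1) * c₁)) ^ (1/r) * w := by
  set C := (a * c₂) / ((l - 1) * c₁) with hC
  have hCpos : 0 < C := div_pos (mul_pos ha hc₂) (mul_pos (by linarith) hc₁)
  set K := C ^ (1/r) with hK
  have hKpos : 0 < K := Real.rpow_pos_of_pos hCpos _
  have hKr : K ^ r = C := by
    rw [hK, ← Real.rpow_mul (le_of_lt hCpos), one_div_mul_cancel (by linarith : r ≠ 0),
      Real.rpow_one]
  -- the power inequality
  have key : |s| ^ r ≤ C * w ^ r := by
    have h1 : (l - 1) * Phi φ |s| ≤ DD φ s := by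
      rw [← DD_abs]
      exact DD_ge_aux hφC1 hφpos hφ1 hφ2l hl hc₂ hδ₀ hr h3 |s| (abs_nonneg s)
    have h2 : c₁ * |s| ^ r / r ≤ Phi φ |s| :=
      le_Phi hφC1 hφpos hc₁ hδ₀ hr h3 (abs_nonneg s) hs
    have h4 : Phi φ w ≤ c₂ * w ^ r / r :=
      Phi_le hφC1 hφpos hc₂ hδ₀ hr h3 hw0 hwδ
    have hchain : (l - 1) * (c₁ * |s| ^ r / r) ≤ a * (c₂ * w ^ r / r) := by
      calc (l - 1) * (c₁ * |s| ^ r / r) ≤ (l - 1) * Phi φ |s| := by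
            apply mul_le_mul_of_nonneg_left h2 (by linarith)
        _ ≤ DD φ s := h1
        _ = Vval := hDD
        _ ≤ a * Phi φ w := hVle
        _ ≤ a * (c₂ * w ^ r / r) := mul_le_mul_of_nonneg_left h4 (le_of_lt ha)
    rw [hC]
    rw [div_mul_eq_mul_div, le_div_iff₀ (mul_pos (by linarith : (0:ℝ) < l - 1) hc₁)]
    have hr0 : 0 < r := by linarith
    have hrne : r ≠ 0 := by linarith
    have h := mul_le_mul_of_nonneg_right hchain (le_of_lt hr0)
    have e1 : (l - 1) * (c₁ * |s| ^ r / r) * r = (l - 1) * c₁ * |s| ^ r := by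
      field_simp
    have e2 : a * (c₂ * w ^ r / r) * r = a * c₂ * w ^ r := by
      field_simp
    rw [e1, e2] at h
    have e3 : |s| ^ r * ((l - 1) * c₁) = (l - 1) * c₁ * |s| ^ r := by ring
    linarith
  -- conclude
  by_contra hcon
  push_neg at hcon
  have hKw : 0 ≤ K * w := mul_nonneg (le_of_lt hKpos) hw0
  have := Real.rpow_lt_rpow hKw hcon (by linarith : 0 < r)
  rw [Real.mul_rpow (le_of_lt hKpos) hw0, hKr] at this
  linarith

lemma gronwall_zero {f f' : ℝ → ℝ} {a b K : ℝ}
    (hf : ∀ t, HasDerivAt f (f' t) t) (h0 : f a = 0)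
    (hb : ∀ t ∈ Icc a b, |f' t| ≤ K * |f t|) : ∀ t ∈ Icc a b, f t = 0 := by
  intro t ht
  have hcont : ContinuousOn f (Icc a b) :=
    (continuous_iff_continuousAt.mpr (fun x => (hf x).continuousAt)).continuousOn
  have key := norm_le_gronwallBound_of_norm_deriv_right_le (δ := 0) (K := K) (ε := 0)
    hcont (fun x _ => (hf x).hasDerivWithinAt)
    (by simp [h0]) (fun x hx => by
      rw [Real.norm_eq_abs, Real.norm_eq_abs, add_zero]
      exact hb x (Ico_subset_Icc_self hx))
  have := key t ht
  rw [gronwallBound_ε0] at this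
  simp only [zero_mul] at this
  have h := abs_nonneg (f t)
  rw [Real.norm_eq_abs] at this
  have : |f t| = 0 := le_antisymm this h
  exact abs_eq_zero.mp this

lemma gronwall_zero' {f f' : ℝ → ℝ} {a b K : ℝ}
    (hf : ∀ t, HasDerivAt f (f' t) t) (h0 : f b = 0)
    (hb : ∀ t ∈ Icc a b, |f' t| ≤ K * |f t|) : ∀ t ∈ Icc a b, f t = 0 := by
  intro t ht
  have hg : ∀ s, HasDerivAt (fun s => f (a + b - s)) (-(f' (a + b - s))) s := by
    intro s
    have h1 : HasDerivAt (fun s : ℝ => a + b - s) (-1) s := by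
      simpa using (hasDerivAt_id s).const_sub (a + b)
    have := (hf (a + b - s)).comp s h1
    refine this.congr_deriv ?_
    ring
  have key := gronwall_zero (f := fun s => f (a + b - s)) (f' := fun s => -(f' (a + b - s)))
    (a := a) (b := b) hg (by simpa using h0)
    (fun s hs => by
      have hs' : a + b - s ∈ Icc a b := ⟨by linarith [hs.2], by linarith [hs.1]⟩
      rw [abs_neg]
      exact hb _ hs')
  have := key (a + b - t) ⟨by linarith [ht.2], by linarith [ht.1]⟩
  simpa using this

lemma positivity_persist {f : ℝ → ℝ} (hfd : Differentiable ℝ f) (hf'c : Continuous (deriv f))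
    {δ' K : ℝ} (hδ' : 0 < δ') (hK : 0 ≤ K)
    (hf0 : 0 < f 0)
    (hbound : ∀ t, 0 ≤ f t → f t < δ' → |deriv f t| ≤ δ' → |deriv f t| ≤ K * f t)
    (hzero : ∀ t, f t = 0 → deriv f t = 0) :
    ∀ t, 0 < f t := by
  by_contra hcon
  push_neg at hcon
  obtain ⟨x, hx⟩ := hcon
  have hfc : Continuous f := hfd.continuous
  have hxne : x ≠ 0 := fun h => by rw [h] at hx; linarith
  rcases lt_or_gt_of_ne hxne with hxneg|hxpos
  · -- x < 0 : work on [x,0]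
    set S := Icc x 0 ∩ f ⁻¹' {0} with hS
    have hSclosed : IsClosed S := isClosed_Icc.inter (isClosed_singleton.preimage hfc)
    have hSne : S.Nonempty := by
      have him := intermediate_value_Icc (le_of_lt hxneg) hfc.continuousOn
      have h0m : (0:ℝ) ∈ Icc (f x) (f 0) := ⟨hx, le_of_lt hf0⟩
      obtain ⟨τ, hτ1, hτ2⟩ := him h0m
      exact ⟨τ, hτ1, hτ2⟩
    have hbdd : BddAbove S := ⟨0, fun y hy => hy.1.2⟩
    set t₂ := sSup S with ht₂
    have ht₂S : t₂ ∈ S := hSclosed.csSup_mem hSne hbdd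
    have ht₂0 : f t₂ = 0 := ht₂S.2
    have ht₂ne : t₂ ≠ 0 := fun h => by rw [h] at ht₂0; rw [ht₂0] at hf0; exact lt_irrefl 0 hf0
    have ht₂neg : t₂ < 0 := lt_of_le_of_ne ht₂S.1.2 ht₂ne
    have hpos : ∀ t ∈ Ioc t₂ 0, 0 < f t := by
      intro t ht
      by_contra hle
      push_neg at hle
      have him := intermediate_value_Icc (ht.2 : t ≤ 0) hfc.continuousOn
      have h0m : (0:ℝ) ∈ Icc (f t) (f 0) := ⟨hle, le_of_lt hf0⟩
      obtain ⟨τ, hτ1, hτ2⟩ := him h0m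
      have hτS : τ ∈ S :=
        ⟨⟨le_trans ht₂S.1.1 (le_trans (le_of_lt ht.1) hτ1.1), hτ1.2⟩, hτ2⟩
      have := le_csSup hbdd hτS
      have : t ≤ t₂ := le_trans hτ1.1 this
      linarith [ht.1]
    -- choose η
    have hd0 : deriv f t₂ = 0 := hzero _ ht₂0
    have hUf : ∀ᶠ t in 𝓝 t₂, f t < δ' ∧ |deriv f t| ≤ δ' := by
      have h1 : Tendsto f (𝓝 t₂) (𝓝 0) := by
        have := hfc.continuousAt (x := t₂); rwa [ContinuousAt, ht₂0] at this
      have h2 : Tendsto (fun t => |deriv f t|) (𝓝 t₂) (𝓝 0) := by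
        have := (hf'c.abs).continuousAt (x := t₂)
        rwa [ContinuousAt, hd0, abs_zero] at this
      filter_upwards [h1.eventually_lt_const hδ', h2.eventually_lt_const hδ'] with t h1 h2
      exact ⟨h1, le_of_lt h2⟩
    obtain ⟨ε, hε, hball⟩ := Metric.eventually_nhds_iff.mp hUf
    set η := min (-t₂) (ε/2) with hη
    have hηpos : 0 < η := lt_min (by linarith) (by linarith)
    have hηt₂ : t₂ + η ≤ 0 := by
      have : η ≤ -t₂ := min_le_left _ _
      linarith
    have hsub : ∀ t ∈ Icc t₂ (t₂ + η), f t < δ' ∧ |deriv f t| ≤ δ' := by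
      intro t ht
      apply hball
      rw [Real.dist_eq, abs_sub_comm, abs_of_nonpos (by linarith [ht.1])]
      have : η ≤ ε/2 := min_le_right _ _
      linarith [ht.2]
    have hnn : ∀ t ∈ Icc t₂ (t₂ + η), 0 ≤ f t := by
      intro t ht
      rcases eq_or_lt_of_le ht.1 with h|h
      · rw [← h, ht₂0]
      · exact le_of_lt (hpos t ⟨h, le_trans ht.2 hηt₂⟩)
    have hzero' := gronwall_zero (f := f) (f' := deriv f) (a := t₂) (b := t₂ + η)
      (fun t => (hfd t).hasDerivAt) ht₂0
      (fun t ht => by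
        rw [abs_of_nonneg (hnn t ht)]
        exact hbound t (hnn t ht) (hsub t ht).1 (hsub t ht).2)
    have hend : f (t₂ + η) = 0 := hzero' _ ⟨by linarith, le_rfl⟩
    have := hpos (t₂ + η) ⟨by linarith, hηt₂⟩
    rw [hend] at this
    exact lt_irrefl 0 this
  · -- x > 0 : work on [0,x]
    set S := Icc 0 x ∩ f ⁻¹' {0} with hS
    have hSclosed : IsClosed S := isClosed_Icc.inter (isClosed_singleton.preimage hfc)
    have hSne : S.Nonempty := by
      have him := intermediate_value_Icc' (le_of_lt hxpos) hfc.continuousOn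
      have h0m : (0:ℝ) ∈ Icc (f x) (f 0) := ⟨hx, le_of_lt hf0⟩
      obtain ⟨τ, hτ1, hτ2⟩ := him h0m
      exact ⟨τ, hτ1, hτ2⟩
    have hbdd : BddBelow S := ⟨0, fun y hy => hy.1.1⟩
    set t₂ := sInf S with ht₂
    have ht₂S : t₂ ∈ S := hSclosed.csInf_mem hSne hbdd
    have ht₂0 : f t₂ = 0 := ht₂S.2
    have ht₂ne : t₂ ≠ 0 := fun h => by rw [h] at ht₂0; rw [ht₂0] at hf0; exact lt_irrefl 0 hf0
    have ht₂pos : 0 < t₂ := lt_of_le_of_ne ht₂S.1.1 (Ne.symm ht₂ne)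
    have hpos : ∀ t ∈ Ico 0 t₂, 0 < f t := by
      intro t ht
      by_contra hle
      push_neg at hle
      have him := intermediate_value_Icc' (ht.1 : 0 ≤ t) hfc.continuousOn
      have h0m : (0:ℝ) ∈ Icc (f t) (f 0) := ⟨hle, le_of_lt hf0⟩
      obtain ⟨τ, hτ1, hτ2⟩ := him h0m
      have hτS : τ ∈ S :=
        ⟨⟨hτ1.1, le_trans hτ1.2 (le_trans (le_of_lt ht.2) ht₂S.1.2)⟩, hτ2⟩
      have := csInf_le hbdd hτS
      have : t₂ ≤ t := le_trans this hτ1.2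
      linarith [ht.2]
    have hd0 : deriv f t₂ = 0 := hzero _ ht₂0
    have hUf : ∀ᶠ t in 𝓝 t₂, f t < δ' ∧ |deriv f t| ≤ δ' := by
      have h1 : Tendsto f (𝓝 t₂) (𝓝 0) := by
        have := hfc.continuousAt (x := t₂); rwa [ContinuousAt, ht₂0] at this
      have h2 : Tendsto (fun t => |deriv f t|) (𝓝 t₂) (𝓝 0) := by
        have := (hf'c.abs).continuousAt (x := t₂)
        rwa [ContinuousAt, hd0, abs_zero] at this
      filter_upwards [h1.eventually_lt_const hδ', h2.eventually_lt_const hδ'] with t h1 h2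
      exact ⟨h1, le_of_lt h2⟩
    obtain ⟨ε, hε, hball⟩ := Metric.eventually_nhds_iff.mp hUf
    set η := min t₂ (ε/2) with hη
    have hηpos : 0 < η := lt_min ht₂pos (by linarith)
    have hηt₂ : 0 ≤ t₂ - η := by
      have : η ≤ t₂ := min_le_left _ _
      linarith
    have hsub : ∀ t ∈ Icc (t₂ - η) t₂, f t < δ' ∧ |deriv f t| ≤ δ' := by
      intro t ht
      apply hball
      rw [Real.dist_eq, abs_of_nonpos (by linarith [ht.2])]
      have : η ≤ ε/2 := min_le_right _ _
      linarith [ht.1]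
    have hnn : ∀ t ∈ Icc (t₂ - η) t₂, 0 ≤ f t := by
      intro t ht
      rcases eq_or_lt_of_le ht.2 with h|h
      · rw [h, ht₂0]
      · exact le_of_lt (hpos t ⟨le_trans hηt₂ ht.1, h⟩)
    have hzero' := gronwall_zero' (f := f) (f' := deriv f) (a := t₂ - η) (b := t₂)
      (fun t => (hfd t).hasDerivAt) ht₂0
      (fun t ht => by
        rw [abs_of_nonneg (hnn t ht)]
        exact hbound t (hnn t ht) (hsub t ht).1 (hsub t ht).2)
    have hend : f (t₂ - η) = 0 := hzero' _ ⟨le_rfl, by linarith⟩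
    have := hpos (t₂ - η) ⟨hηt₂, by linarith⟩
    rw [hend] at this
    exact lt_irrefl 0 this

lemma energy_identity {φ V q : ℝ → ℝ} {α c₂ δ₀ r : ℝ}
    (hφC1 : ContDiffOn ℝ 1 φ (Set.Ioi 0))
    (hφpos : ∀ t > 0, 0 < φ t)
    (hc₂ : 0 < c₂) (hδ₀ : 0 < δ₀) (hr : 1 < r)
    (h3u : ∀ t : ℝ, 0 < t → t ≤ δ₀ → φ t * t ≤ c₂ * t ^ (r - 1))
    (h3 : ∀ t : ℝ, 0 < t → t ≤ δ₀ → (0:ℝ) * t ^ (r - 1) ≤ φ t * t ∧ φ t * t ≤ c₂ * t ^ (r - 1))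
    (hV1 : ContDiff ℝ 1 V) (hVα : V α = 0)
    (hqdiff : Differentiable ℝ q)
    (hF : ∀ t : ℝ, HasDerivAt
      (fun s => if deriv q s = 0 then 0 else φ |deriv q s| * deriv q s) (deriv V (q t)) t)
    (hq2 : Differentiable ℝ (deriv q))
    (hqtop : Tendsto q atTop (nhds α)) :
    ∀ t, DD φ (deriv q t) = V (q t) := by
  set EE : ℝ → ℝ := fun t => deriv q t * gg φ (deriv q t) - Phi φ (deriv q t) - V (q t) with hEE
  have hFgg : (fun s => if deriv q s = 0 then 0 else φ |deriv q s| * deriv q s)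
      = fun t => gg φ (deriv q t) := rfl
  have hPhiD : ∀ s : ℝ, HasDerivAt (Phi φ) (gg φ s) s :=
    fun s => hasDerivAt_Phi hφC1 hφpos hc₂ hδ₀ hr h3 s
  have hEEd : ∀ t, HasDerivAt EE 0 t := by
    intro t
    have hq'' : HasDerivAt (deriv q) (deriv (deriv q) t) t := (hq2 t).hasDerivAt
    have hgg' : HasDerivAt (fun t => gg φ (deriv q t)) (deriv V (q t)) t := by
      rw [← hFgg]; exact hF t
    have h1 : HasDerivAt (fun t => deriv q t * gg φ (deriv q t))
        (deriv (deriv q) t * gg φ (deriv q t) + deriv q t * deriv V (q t)) t := hq''.mul hgg'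
    have h2 : HasDerivAt (fun t => Phi φ (deriv q t)) (gg φ (deriv q t) * deriv (deriv q) t) t :=
      (hPhiD (deriv q t)).comp t hq''
    have hV : HasDerivAt V (deriv V (q t)) (q t) := (hV1.differentiable one_ne_zero (q t)).hasDerivAt
    have h3' : HasDerivAt (fun t => V (q t)) (deriv V (q t) * deriv q t) t :=
      hV.comp t (hqdiff t).hasDerivAt
    have hfin := (h1.sub h2).sub h3'
    refine hfin.congr_deriv ?_
    ring
  have hEEc : ∀ t, EE t = EE 0 := by
    intro t
    apply is_const_of_deriv_eq_zero (fun x => (hEEd x).differentiableAt)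
    intro x
    exact (hEEd x).deriv
  have hEE0 : ∀ t : ℝ, EE t = 0 := by
    have hex : ∀ n : ℕ, ∃ c ∈ Ioo (n:ℝ) ((n:ℝ)+1),
        deriv q c = (q ((n:ℝ)+1) - q (n:ℝ)) / (((n:ℝ)+1) - (n:ℝ)) := by
      intro n
      exact exists_hasDerivAt_eq_slope q (deriv q) (by linarith)
        (hqdiff.continuous.continuousOn) (fun x _ => (hqdiff x).hasDerivAt)
    choose c hc1 hc2 using hex
    have hctop : Tendsto c atTop atTop :=
      tendsto_atTop_mono (fun n => ((hc1 n).1).le) tendsto_natCast_atTop_atTop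
    have hcu : ∀ n, deriv q (c n) = q ((n:ℝ)+1) - q (n:ℝ) := by
      intro n; rw [hc2 n]; simp
    have hu : Tendsto (fun n => deriv q (c n)) atTop (𝓝 0) := by
      have h1 : Tendsto (fun n : ℕ => q ((n:ℝ)+1)) atTop (𝓝 α) :=
        hqtop.comp (tendsto_atTop_add_const_right _ 1 tendsto_natCast_atTop_atTop)
      have h2 : Tendsto (fun n : ℕ => q (n:ℝ)) atTop (𝓝 α) :=
        hqtop.comp tendsto_natCast_atTop_atTop
      have hsub := h1.sub h2
      rw [sub_self] at hsub
      simp only [hcu]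
      exact hsub
    have huabs : Tendsto (fun n => |deriv q (c n)|) atTop (𝓝 0) := by
      have := hu.abs; simpa using this
    have hev : ∀ᶠ n in atTop, |deriv q (c n)| ≤ δ₀ :=
      (huabs.eventually_lt_const hδ₀).mono (fun n h => le_of_lt h)
    have hrpow : Tendsto (fun n => |deriv q (c n)| ^ r) atTop (𝓝 0) := by
      have hc : ContinuousAt (fun x : ℝ => x ^ r) 0 :=
        Real.continuousAt_rpow_const 0 r (Or.inr (by linarith))
      have := hc.tendsto.comp huabs
      rwa [Real.zero_rpow (by linarith : r ≠ 0)] at this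
    have T1 : Tendsto (fun n => deriv q (c n) * gg φ (deriv q (c n))) atTop (𝓝 0) := by
      apply squeeze_zero_norm' (a := fun n => c₂ * |deriv q (c n)| ^ r)
      · filter_upwards [hev] with n hn
        set u := deriv q (c n)
        rcases eq_or_ne u 0 with h|h
        · simp [h, gg, Real.zero_rpow (by linarith : r ≠ 0)]
        · have habs : 0 < |u| := abs_pos.mpr h
          rw [Real.norm_eq_abs, abs_mul]
          calc |u| * |gg φ u| ≤ |u| * (c₂ * |u| ^ (r-1)) :=
                mul_le_mul_of_nonneg_left
                  (gg_abs_le hφpos hr (fun t ht ht' => ⟨by rw [zero_mul]; exact le_of_lt (mul_pos (hφpos t ht) ht), h3u t ht ht'⟩) hn)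
                  (abs_nonneg u)
            _ = c₂ * |u| ^ r := by
                have hh : |u| ^ r = |u| ^ (r-1) * |u| := by
                  rw [← Real.rpow_add_one (ne_of_gt habs)]; norm_num
                rw [hh]; ring
      · have := hrpow.const_mul c₂
        simpa using this
    have T2 : Tendsto (fun n => Phi φ (deriv q (c n))) atTop (𝓝 0) := by
      apply squeeze_zero' (g := fun n => c₂ * |deriv q (c n)| ^ r / r)
      · exact Eventually.of_forall (fun n => Phi_nonneg hφpos _)
      · filter_upwards [hev] with n hn
        rw [← Phi_abs]
        exact Phi_le hφC1 hφpos hc₂ hδ₀ hr h3 (abs_nonneg _) hn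
      · have := (hrpow.const_mul c₂).div_const r
        simpa using this
    have T3 : Tendsto (fun n => V (q (c n))) atTop (𝓝 0) := by
      have hqc : Tendsto (fun n => q (c n)) atTop (𝓝 α) := hqtop.comp hctop
      have := (hV1.continuous.continuousAt (x := α)).tendsto.comp hqc
      rwa [hVα] at this
    have TE : Tendsto (fun n => EE (c n)) atTop (𝓝 0) := by
      have := (T1.sub T2).sub T3
      simpa [hEE] using this
    have hconst : (fun n : ℕ => EE (c n)) = fun _ => EE 0 := funext (fun n => hEEc (c n))
    rw [hconst] at TE
    have h00 : EE 0 = 0 := tendsto_nhds_unique tendsto_const_nhds TE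
    intro t
    rw [hEEc t, h00]
  intro t
  have := hEE0 t
  simp only [hEE, DD] at this ⊢
  linarith

theorem statement14 (φ V : ℝ → ℝ) (l m α : ℝ) (q : ℝ → ℝ)
    (hφC1 : ContDiffOn ℝ 1 φ (Set.Ioi 0))
    (hφpos : ∀ t > 0, 0 < φ t)
    (hφ1 : ∀ t > 0, 0 < deriv (fun s => φ s * s) t)
    (hl : 1 < l) (hlm : l ≤ m)
    (hφ2 : ∀ t > 0, l - 1 ≤ deriv (fun s => φ s * s) t / φ t ∧
      deriv (fun s => φ s * s) t / φ t ≤ m - 1)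
    (hφ3 : ∃ c₁ c₂ δ₀ r : ℝ, 0 < c₁ ∧ 0 < c₂ ∧ 0 < δ₀ ∧ 1 < r ∧
      ∀ t : ℝ, 0 < t → t ≤ δ₀ → c₁ * t ^ (r - 1) ≤ φ t * t ∧ φ t * t ≤ c₂ * t ^ (r - 1))
    (hα : 0 < α)
    (hV1 : ContDiff ℝ 1 V) (hVnn : ∀ t, 0 ≤ V t)
    (hV2 : V α = 0 ∧ V (-α) = 0 ∧ ∀ t, -α < t → t < α → 0 < V t)
    (hV3 : ∃ a₁ a₂ a₃ a₄ δ : ℝ, 0 < a₁ ∧ 0 < a₂ ∧ 0 < a₃ ∧ 0 < a₄ ∧ 0 < δ ∧ δ < α ∧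
      (∀ t, α - δ < t → t ≤ α → a₁ * Phi φ |t - α| ≤ V t ∧ V t ≤ a₂ * Phi φ |t - α|) ∧
      (∀ t, -α ≤ t → t < -α + δ → a₃ * Phi φ |t + α| ≤ V t ∧ V t ≤ a₄ * Phi φ |t + α|))
    (hV4 : ∃ k₁ k₂ k₃ k₄ k₅ k₆ k₇ k₈ : ℝ, 0 < k₁ ∧ 0 < k₂ ∧ 0 < k₃ ∧ 0 < k₄ ∧
      0 < k₅ ∧ 0 < k₆ ∧ 0 < k₇ ∧ 0 < k₈ ∧
      (∀ t, 0 ≤ t → t ≤ α →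
        -(k₃ * t * φ (k₄ * |t - α|) * |t - α|) ≤ deriv V t ∧
        deriv V t ≤ -(k₁ * t * φ (k₂ * |t - α|) * |t - α|)) ∧
      (∀ t, -α ≤ t → t ≤ 0 →
        -(k₇ * t * φ (k₈ * |t + α|) * |t + α|) ≤ deriv V t ∧
        deriv V t ≤ -(k₅ * t * φ (k₆ * |t + α|) * |t + α|)))
    (hV5 : ∃ ρ > 0, StrictConvexOn ℝ (Set.Ioo (-α - ρ) (-α + ρ)) V ∧
      StrictConvexOn ℝ (Set.Ioo (α - ρ) (α + ρ)) V)
    (hq : IsHeteroclinic φ V α q)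
    (huniq : ∀ u : ℝ → ℝ, IsHeteroclinic φ V α u → u = q) :
    ((∀ s < (0:ℝ), -α < q s ∧ q s < 0) ∧ (∀ t > (0:ℝ), 0 < q t ∧ q t < α)) ∧
    ((∀ t : ℝ, 0 < deriv q t) ∧ StrictMono q) ∧
    (AntitoneOn (deriv q) (Set.Ici 0) ∧ ConcaveOn ℝ (Set.Ici 0) q) := by
  obtain ⟨c₁, c₂, δ₀, r, hc₁, hc₂, hδ₀, hr, h3⟩ := hφ3
  obtain ⟨⟨hqdiff, hF⟩, hq2, hq'c, hq0, hqtop, hqbot⟩ := hq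
  obtain ⟨a₁, a₂, a₃, a₄, δ, ha₁, ha₂, ha₃, ha₄, hδ, hδα, hV3p, hV3m⟩ := hV3
  obtain ⟨hVα, hVmα, hVpos⟩ := hV2
  have hφ2l : ∀ t > 0, l - 1 ≤ deriv (fun s => φ s * s) t / φ t := fun t ht => (hφ2 t ht).1
  have h30 : ∀ t : ℝ, 0 < t → t ≤ δ₀ →
      (0:ℝ) * t ^ (r - 1) ≤ φ t * t ∧ φ t * t ≤ c₂ * t ^ (r - 1) :=
    fun t ht ht' => ⟨by rw [zero_mul]; exact le_of_lt (mul_pos (hφpos t ht) ht), (h3 t ht ht').2⟩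
  -- energy identity
  have hKI : ∀ t, DD φ (deriv q t) = V (q t) :=
    energy_identity hφC1 hφpos hc₂ hδ₀ hr (fun t ht ht' => (h3 t ht ht').2) h30
      hV1 hVα hqdiff hF hq2 hqtop
  -- derivative vanishes where V (q t) = 0
  have hq'zero : ∀ t, V (q t) = 0 → deriv q t = 0 := by
    intro t h
    by_contra hne
    have hDDpos := DD_pos' hφC1 hφpos hφ1 hδ₀ hr h3 hne
    rw [hKI t, h] at hDDpos
    exact lt_irrefl 0 hDDpos
  set δ' := min δ δ₀ with hδ'
  have hδ'pos : 0 < δ' := lt_min hδ hδ₀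
  -- q stays below α
  have hdP : deriv (fun s => α - q s) = fun t => -(deriv q t) :=
    funext fun t => (((hqdiff t).hasDerivAt).const_sub α).deriv
  have hqlt : ∀ t, q t < α := by
    have hCnn : (0:ℝ) ≤ (a₂ * c₂) / ((l - 1) * c₁) :=
      le_of_lt (div_pos (mul_pos ha₂ hc₂) (mul_pos (by linarith) hc₁))
    have hKPnn : (0:ℝ) ≤ ((a₂ * c₂) / ((l - 1) * c₁)) ^ (1/r) := Real.rpow_nonneg hCnn _
    have key := positivity_persist (f := fun s => α - q s)
      ((differentiable_const α).sub hqdiff) (by rw [hdP]; exact hq'c.neg) hδ'pos hKPnn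
      (by show (0:ℝ) < α - q 0; rw [hq0, sub_zero]; exact hα)
      (by
        intro t h0 h1 h2
        replace h0 : (0:ℝ) ≤ α - q t := h0
        replace h1 : α - q t < δ' := h1
        simp only [hdP] at h2 ⊢
        rw [abs_neg] at h2 ⊢
        have hw0 : (0:ℝ) ≤ α - q t := h0
        have hwδ : α - q t ≤ δ₀ := le_trans (le_of_lt h1) (min_le_right _ _)
        have hsδ : |deriv q t| ≤ δ₀ := le_trans h2 (min_le_right _ _)
        have habs : |q t - α| = α - q t := by rw [abs_sub_comm, abs_of_nonneg hw0]
        have hVle : V (q t) ≤ a₂ * Phi φ (α - q t) := by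
          have hmin : δ' ≤ δ := min_le_left _ _
          have hh := (hV3p (q t) (by linarith) (by linarith)).2
          rwa [habs] at hh
        exact qprime_bound hφC1 hφpos hφ1 hφ2l hl hc₁ hc₂ hδ₀ hr h3 ha₂ hw0 hwδ hsδ hVle (hKI t))
      (by
        intro t ht
        replace ht : α - q t = 0 := ht
        have hqt : q t = α := by linarith
        simp only [hdP]
        have hz : deriv q t = 0 := hq'zero t (by rw [hqt, hVα])
        rw [hz, neg_zero])
    intro t
    have hfin : (0:ℝ) < α - q t := key t
    linarith
  -- q stays above -α
  have hdM : deriv (fun s => q s + α) = deriv q :=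
    funext fun t => ((hqdiff t).hasDerivAt.add_const α).deriv
  have hqgt : ∀ t, -α < q t := by
    have hCnn : (0:ℝ) ≤ (a₄ * c₂) / ((l - 1) * c₁) :=
      le_of_lt (div_pos (mul_pos ha₄ hc₂) (mul_pos (by linarith) hc₁))
    have hKPnn : (0:ℝ) ≤ ((a₄ * c₂) / ((l - 1) * c₁)) ^ (1/r) := Real.rpow_nonneg hCnn _
    have key := positivity_persist (f := fun s => q s + α)
      (hqdiff.add_const α) (by rw [hdM]; exact hq'c) hδ'pos hKPnn
      (by show (0:ℝ) < q 0 + α; rw [hq0, zero_add]; exact hα)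
      (by
        intro t h0 h1 h2
        replace h0 : (0:ℝ) ≤ q t + α := h0
        replace h1 : q t + α < δ' := h1
        simp only [hdM] at h2 ⊢
        have hw0 : (0:ℝ) ≤ q t + α := h0
        have hwδ : q t + α ≤ δ₀ := le_trans (le_of_lt h1) (min_le_right _ _)
        have hsδ : |deriv q t| ≤ δ₀ := le_trans h2 (min_le_right _ _)
        have habs : |q t + α| = q t + α := abs_of_nonneg hw0
        have hVle : V (q t) ≤ a₄ * Phi φ (q t + α) := by
          have hmin : δ' ≤ δ := min_le_left _ _
          have hh := (hV3m (q t) (by linarith) (by linarith)).2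
          rwa [habs] at hh
        exact qprime_bound hφC1 hφpos hφ1 hφ2l hl hc₁ hc₂ hδ₀ hr h3 ha₄ hw0 hwδ hsδ hVle (hKI t))
      (by
        intro t ht
        replace ht : q t + α = 0 := ht
        have hqt : q t = -α := by linarith
        simp only [hdM]
        exact hq'zero t (by rw [hqt, hVmα]))
    intro t
    have hfin : (0:ℝ) < q t + α := key t
    linarith
  -- derivative never vanishes
  have hVq : ∀ t, 0 < V (q t) := fun t => hVpos _ (hqgt t) (hqlt t)
  have hq'ne : ∀ t, deriv q t ≠ 0 := by
    intro t h
    have hKIt := hKI t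
    rw [h, DD_zero (φ := φ)] at hKIt
    linarith [hVq t]
  -- somewhere positive
  have hex : ∃ ξ, 0 < deriv q ξ := by
    have hev : ∀ᶠ t in atTop, α/2 < q t := hqtop.eventually (eventually_gt_nhds (by linarith))
    obtain ⟨T, hT1, hT2⟩ := (hev.and (eventually_ge_atTop (1:ℝ))).exists
    obtain ⟨ξ, hξ1, hξ2⟩ := exists_hasDerivAt_eq_slope q (deriv q) (by linarith : (0:ℝ) < T)
      hqdiff.continuous.continuousOn (fun x _ => (hqdiff x).hasDerivAt)
    refine ⟨ξ, ?_⟩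
    rw [hξ2, hq0, sub_zero, sub_zero]
    exact div_pos (by linarith) (by linarith)
  obtain ⟨ξ, hξ⟩ := hex
  have hq'pos : ∀ t, 0 < deriv q t := by
    intro t
    rcases lt_trichotomy (deriv q t) 0 with h|h|h
    · exfalso
      rcases lt_trichotomy t ξ with ho|ho|ho
      · have him := intermediate_value_Ioo (le_of_lt ho) hq'c.continuousOn
        obtain ⟨σ, _, hσ⟩ := him (⟨h, hξ⟩ : (0:ℝ) ∈ Ioo (deriv q t) (deriv q ξ))
        exact hq'ne σ hσ
      · rw [ho] at h; linarith
      · have him := intermediate_value_Ioo' (le_of_lt ho) hq'c.continuousOn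
        obtain ⟨σ, _, hσ⟩ := him (⟨h, hξ⟩ : (0:ℝ) ∈ Ioo (deriv q t) (deriv q ξ))
        exact hq'ne σ hσ
    · exact absurd h (hq'ne t)
    · exact h
  have hsm : StrictMono q := strictMono_of_deriv_pos hq'pos
  -- antitone derivative on [0,∞)
  have hF' : ∀ x : ℝ, HasDerivAt (fun t => gg φ (deriv q t)) (deriv V (q x)) x := hF
  obtain ⟨k₁, k₂, k₃, k₄, k₅, k₆, k₇, k₈, hk₁, hk₂, hk₃, hk₄, hk₅, hk₆, hk₇, hk₈, hV4p, hV4m⟩ := hV4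
  have hAnti : AntitoneOn (deriv q) (Ici 0) := by
    have hFanti : AntitoneOn (fun t => gg φ (deriv q t)) (Ici 0) := by
      apply antitoneOn_of_deriv_nonpos (convex_Ici 0)
      · exact (continuous_iff_continuousAt.mpr (fun x => (hF' x).continuousAt)).continuousOn
      · intro x _
        exact (hF' x).differentiableAt.differentiableWithinAt
      · intro x hx
        rw [interior_Ici] at hx
        rw [(hF' x).deriv]
        have hqx0 : 0 ≤ q x := by
          have := hsm hx
          rw [hq0] at this
          exact le_of_lt this
        have hub := (hV4p (q x) hqx0 (le_of_lt (hqlt x))).2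
        have hargpos : 0 < k₂ * |q x - α| := by
          have h1 : q x < α := hqlt x
          have h2 : 0 < |q x - α| := abs_pos.mpr (by linarith)
          positivity
        have hφp := hφpos _ hargpos
        have hprod : 0 ≤ k₁ * q x * φ (k₂ * |q x - α|) * |q x - α| := by positivity
        linarith
    intro s hs t ht hst
    by_contra hcon
    push_neg at hcon
    have h1 : gg φ (deriv q s) < gg φ (deriv q t) :=
      gg_smo hφC1 hφpos hφ1 hδ₀ hr h3 (le_of_lt (hq'pos s)) (le_of_lt (hq'pos t)) hcon
    have h2 := hFanti hs ht hst
    simp only at h2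
    linarith
  have hConc : ConcaveOn ℝ (Ici 0) q := by
    apply AntitoneOn.concaveOn_of_deriv (convex_Ici 0) hqdiff.continuous.continuousOn
      hqdiff.differentiableOn
    rw [interior_Ici]
    exact hAnti.mono Ioi_subset_Ici_self
  refine ⟨⟨fun s hs => ⟨hqgt s, ?_⟩, fun t ht => ⟨?_, hqlt t⟩⟩, ⟨hq'pos, hsm⟩, hAnti, hConc⟩
  · have := hsm hs; rwa [hq0] at this
  · have := hsm ht; rwa [hq0] at this
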